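/- Let p be a prime number, c an integer, and b a natural number. Then for every integer m, C(p·m + p·c, p·b) is congruent to C(m + c, b) modulo p. -/

import Mathlib

/-- Reflection formula: `Ring.choose (-(s+1)) k = (-1)^k * (s+k).choose k` in `ℤ`. -/
lemma ring_choose_neg (s k : ℕ) :
    Ring.choose (-(s : ℤ) - 1) k = (-1) ^ k * ((s + k).choose k : ℤ) := by
  refine nsmul_right_injective (Nat.factorial_ne_zero k) ?_
  simp only
  rw [← Ring.descPochhammer_eq_factorial_smul_choose, ← Polynomial.eval_eq_smeval,
    descPochhammer_eval_eq_ascPochhammer]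
  have h1 : (-(s : ℤ) - 1 - k + 1) = -((s + k : ℕ) : ℤ) := by push_cast; ring
  rw [h1, ascPochhammer_eval_neg_eq_descPochhammer,
    descPochhammer_eval_eq_descFactorial ℤ (s + k) k,
    Nat.descFactorial_eq_factorial_mul_choose]
  push_cast
  ring

/-- Nat version of the Lucas congruence. -/
lemma nat_lucas_mul (p : ℕ) (hp : p.Prime) (n b : ℕ) :
    (((p * n).choose (p * b) : ℤ) : ZMod p) = ((n.choose b : ℤ) : ZMod p) := by
  haveI : Fact p.Prime := ⟨hp⟩
  have h := Choose.choose_modEq_choose_mod_mul_choose_div (p := p) (n := p * n) (k := p * b)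
  have h2 : (((p * n).choose (p * b) : ℤ) : ZMod p) =
      (((p * n % p).choose (p * b % p) * ((p * n / p).choose (p * b / p)) : ℤ) : ZMod p) := by
    exact_mod_cast (ZMod.intCast_eq_intCast_iff' _ _ _).mpr h
  rw [h2]
  simp [Nat.mul_mod_right, Nat.mul_div_cancel_left _ hp.pos]

/-- Let `p` be a prime number, `c` an integer, and `b` a natural number. Then for
every integer `m`, `C(p·m + p·c, p·b)` is congruent to `C(m + c, b)` modulo `p`. -/
theorem stmt3 (p : ℕ) (hp : p.Prime) (c : ℤ) (b : ℕ) (m : ℤ) :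
    ((Ring.choose ((p : ℤ) * m + (p : ℤ) * c) (p * b) : ℤ) : ZMod p) =
      ((Ring.choose (m + c) b : ℤ) : ZMod p) := by
  haveI : Fact p.Prime := ⟨hp⟩
  have hz : (p : ℤ) * m + (p : ℤ) * c = (p : ℤ) * (m + c) := by ring
  rw [hz]
  rcases le_or_gt 0 (m + c) with hnn | hneg
  · obtain ⟨n, hn⟩ := Int.eq_ofNat_of_zero_le hnn
    rw [hn]
    have h1 : (p : ℤ) * (n : ℤ) = ((p * n : ℕ) : ℤ) := by push_cast; ring
    rw [h1, Ring.choose_natCast, Ring.choose_natCast]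
    exact nat_lucas_mul p hp n b
  · -- negative case
    obtain ⟨s, hs⟩ : ∃ s : ℕ, m + c = -(s : ℤ) - 1 := by
      refine ⟨(-(m + c) - 1).toNat, ?_⟩
      have : ((-(m + c) - 1).toNat : ℤ) = -(m + c) - 1 := Int.toNat_of_nonneg (by omega)
      omega
    rw [hs]
    have hps : (p : ℤ) * (-(s : ℤ) - 1) = -((p * s + p - 1 : ℕ) : ℤ) - 1 := by
      have : 1 ≤ p := hp.pos
      push_cast [Nat.cast_sub (by omega : 1 ≤ p * s + p)]
      ring
    rw [hps, ring_choose_neg, ring_choose_neg]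
    have hkey : (((p * s + p - 1 + p * b).choose (p * b) : ℤ) : ZMod p) =
        (((s + b).choose b : ℤ) : ZMod p) := by
      have h := Choose.choose_modEq_choose_mod_mul_choose_div (p := p)
        (n := p * s + p - 1 + p * b) (k := p * b)
      have h2 := (ZMod.intCast_eq_intCast_iff' _ _ _).mpr h
      rw [h2]
      have hpos := hp.pos
      have hma : p * (s + b) = p * s + p * b := Nat.mul_add p s b
      have hrw : p * s + p - 1 + p * b = p * (s + b) + (p - 1) := by omega
      have hmod : (p * s + p - 1 + p * b) % p = p - 1 := by
        rw [hrw, Nat.mul_add_mod, Nat.mod_eq_of_lt (by omega)]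
      have hdiv : (p * s + p - 1 + p * b) / p = s + b := by
        rw [hrw, Nat.mul_add_div hpos, Nat.div_eq_of_lt (by omega), add_zero]
      rw [hmod, hdiv, Nat.mul_mod_right, Nat.mul_div_cancel_left _ hpos]
      simp
    have hsign : ((-1 : ℤ) ^ (p * b) : ZMod p) = ((-1 : ℤ) ^ b : ZMod p) := by
      push_cast
      rw [pow_mul, ZMod.pow_card]
    push_cast at hkey hsign ⊢
    rw [hkey, hsign]
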